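/- For every ε > 0 there exists a constant C_ε > 0 such that for all a = (a₁,a₂,a₃) ∈ (ℤ∖{0})³ and all real numbers σ₁,σ₂,σ₃,τ₁,τ₂,τ₃ with 2/3 + ε < σᵢ ≤ 11/12 and 2/3 + ε < τᵢ ≤ 11/12 for all i, one has Σ over (n₁,n₂,n₃,m₁,m₂,m₃) ∈ (ℤ∖{0})⁶ with a₁n₁m₁ + a₂n₂m₂ + a₃n₃m₃ = 0 of 1/(|n₁|^{σ₁}|m₁|^{τ₁}|n₂|^{σ₂}|m₂|^{τ₂}|n₃|^{σ₃}|m₃|^{τ₃}) ≤ C_ε. In particular the bound is uniform in a. -/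

import Mathlib

open scoped BigOperators ENNReal

set_option maxHeartbeats 1000000
noncomputable section

open scoped BigOperators


lemma nat_succ_le_real_pow {r : ℝ} (hr : 1 < r) (α : ℕ) :
    (α : ℝ) + 1 ≤ (1 + 1/(r-1)) * r ^ α := by
  have hr0 : (0:ℝ) < r - 1 := by linarith
  have hbern : 1 + (α : ℝ) * (r - 1) ≤ r ^ α := by
    have := one_add_mul_le_pow (a := r - 1) (by linarith) α
    simpa using this
  have h1 : (1:ℝ) ≤ r ^ α := one_le_pow₀ hr.le
  have h2 : (α : ℝ) * (r - 1) ≤ r ^ α := by nlinarith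
  have h3 : (α : ℝ) ≤ r ^ α / (r - 1) := by
    rw [le_div_iff₀ hr0]; exact h2
  have : (1 + 1/(r-1)) * r ^ α = r ^ α + r ^ α / (r-1) := by field_simp
  rw [this]
  linarith

lemma divisor_bound {δ : ℝ} (hδ : 0 < δ) :
    ∃ Cd : ℝ, 1 ≤ Cd ∧ ∀ K : ℕ, K ≠ 0 → (K.divisors.card : ℝ) ≤ Cd * (K : ℝ) ^ δ := by
  classical
  set r : ℝ := (2 : ℝ) ^ δ with hr
  have hr1 : 1 < r := by
    rw [hr]
    exact (Real.one_lt_rpow_iff_of_pos (by norm_num)).mpr (Or.inl ⟨by norm_num, hδ⟩)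
  set B : ℝ := 1 + 1/(r-1) with hB
  have hB1 : 1 ≤ B := by
    have h0 : 0 < r - 1 := by linarith
    have h1 : 0 < 1/(r-1) := by positivity
    rw [hB]; linarith
  set P : ℕ := Nat.ceil ((2:ℝ) ^ (1/δ)) with hP
  refine ⟨B ^ P, one_le_pow₀ hB1, ?_⟩
  intro K hK
  have key : ∀ q ∈ K.primeFactors, ((K.factorization q : ℝ) + 1) ≤
      (if q < P then B else 1) * ((q : ℝ) ^ (K.factorization q : ℕ)) ^ δ := by
    intro q hq
    have hqp : q.Prime := Nat.prime_of_mem_primeFactors hq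
    have hq2 : (2:ℝ) ≤ (q:ℝ) := by exact_mod_cast hqp.two_le
    set α : ℕ := K.factorization q
    have hqpos : (0:ℝ) < q := by linarith
    have hpow : ((q:ℝ) ^ α) ^ δ = ((q:ℝ) ^ δ) ^ α := by
      rw [← Real.rpow_natCast (q:ℝ) α, ← Real.rpow_mul hqpos.le, mul_comm,
        Real.rpow_mul hqpos.le, Real.rpow_natCast]
    have hqδ : r ≤ (q:ℝ) ^ δ := by
      rw [hr]; exact Real.rpow_le_rpow (by norm_num) hq2 hδ.le
    by_cases hsmall : q < P
    · simp only [hsmall, if_true]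
      have h1 : (α : ℝ) + 1 ≤ B * r ^ α := by rw [hB]; exact nat_succ_le_real_pow hr1 α
      have h2 : r ^ α ≤ ((q:ℝ) ^ δ) ^ α := pow_le_pow_left₀ (by positivity) hqδ α
      rw [hpow]
      calc (α:ℝ) + 1 ≤ B * r ^ α := h1
        _ ≤ B * ((q:ℝ)^δ)^α := by nlinarith [hB1]
    · simp only [hsmall, if_false, one_mul]
      have hqP : (P : ℝ) ≤ (q : ℝ) := by exact_mod_cast Nat.le_of_not_lt hsmall
      have h2q : (2:ℝ) ^ (1/δ) ≤ (q:ℝ) := le_trans (Nat.le_ceil _) hqP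
      have hq2δ : (2:ℝ) ≤ (q:ℝ) ^ δ := by
        have := Real.rpow_le_rpow (by positivity) h2q hδ.le
        rwa [← Real.rpow_mul (by norm_num : (0:ℝ) ≤ 2), one_div_mul_cancel hδ.ne',
          Real.rpow_one] at this
      have h2α : ((α:ℝ) + 1) ≤ 2 ^ α := by
        exact_mod_cast Nat.succ_le_of_lt ((Nat.lt_two_pow_self (n := α)))
      have hle : (2:ℝ) ^ α ≤ ((q:ℝ)^δ) ^ α := pow_le_pow_left₀ (by norm_num) hq2δ α
      rw [hpow]; linarith
  have hcard : (K.divisors.card : ℝ) = ∏ q ∈ K.primeFactors, ((K.factorization q : ℝ) + 1) := by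
    rw [Nat.card_divisors hK]
    push_cast
    rfl
  have hKeq : (K : ℝ) ^ δ = ∏ q ∈ K.primeFactors, ((q:ℝ) ^ (K.factorization q)) ^ δ := by
    conv_lhs => rw [← Nat.factorization_prod_pow_eq_self hK]
    unfold Finsupp.prod
    rw [Nat.support_factorization]
    push_cast
    rw [← Real.finset_prod_rpow _ _ (fun i _ => by positivity) δ]
  calc (K.divisors.card : ℝ) = ∏ q ∈ K.primeFactors, ((K.factorization q : ℝ) + 1) := hcard
    _ ≤ ∏ q ∈ K.primeFactors, (if q < P then B else 1) * ((q : ℝ) ^ (K.factorization q)) ^ δ := by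
        apply Finset.prod_le_prod (fun q _ => by positivity) key
    _ = (∏ q ∈ K.primeFactors, (if q < P then B else 1)) * ∏ q ∈ K.primeFactors, ((q : ℝ) ^ (K.factorization q)) ^ δ := by
        rw [Finset.prod_mul_distrib]
    _ ≤ B ^ P * (K:ℝ) ^ δ := by
        rw [← hKeq]
        apply mul_le_mul_of_nonneg_right _ (by positivity)
        rw [Finset.prod_ite, Finset.prod_const, Finset.prod_const, one_pow, mul_one]
        have hsub : (K.primeFactors.filter (fun q => q < P)).card ≤ P := by
          have : (K.primeFactors.filter (fun q => q < P)) ⊆ Finset.range P := by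
            intro q hq
            simp only [Finset.mem_filter] at hq
            exact Finset.mem_range.mpr hq.2
          simpa using Finset.card_le_card this
        calc B ^ (K.primeFactors.filter (fun q => q < P)).card ≤ B ^ P :=
              pow_le_pow_right₀ hB1 hsub

def st7A (k : ℤ) (e : ℝ) : ℝ≥0∞ := ENNReal.ofReal (1/|(k:ℝ)| ^ e)

abbrev st7γ := (ℤ × ℤ × ℤ) × (ℤ × ℤ × ℤ)

abbrev st7P (a₁ a₂ a₃ : ℤ) (v : st7γ) : Prop :=
  v.1.1 ≠ 0 ∧ v.1.2.1 ≠ 0 ∧ v.1.2.2 ≠ 0 ∧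
  v.2.1 ≠ 0 ∧ v.2.2.1 ≠ 0 ∧ v.2.2.2 ≠ 0 ∧
  a₁ * v.1.1 * v.2.1 + a₂ * v.1.2.1 * v.2.2.1 + a₃ * v.1.2.2 * v.2.2.2 = 0

def st7Z (p : ℝ) : ℝ≥0∞ := ∑' n : ℤ, st7A n p

lemma st7A_mul (k l : ℤ) (e : ℝ) : st7A (k*l) e = st7A k e * st7A l e := by
  unfold st7A
  rw [← ENNReal.ofReal_mul (by positivity)]
  congr 1
  push_cast
  rw [abs_mul, Real.mul_rpow (abs_nonneg _) (abs_nonneg _), one_div_mul_one_div]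

lemma st7Z_ne_top {p : ℝ} (hp : 1 < p) : st7Z p ≠ ⊤ := by
  have hsum : Summable fun n : ℤ => 1/|(n:ℝ)| ^ p := by
    refine (Real.summable_abs_int_rpow hp).congr fun n => ?_
    rw [Real.rpow_neg (abs_nonneg _), one_div]
  unfold st7Z st7A
  rw [← ENNReal.ofReal_tsum_of_nonneg (fun n => by positivity) hsum]
  exact ENNReal.ofReal_ne_top

lemma st7_tsum_prod_mul {α β : Type*} (f : α → ℝ≥0∞) (g : β → ℝ≥0∞) :
    ∑' x : α × β, f x.1 * g x.2 = (∑' a, f a) * (∑' b, g b) := by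
  rw [ENNReal.tsum_prod']
  simp_rw [ENNReal.tsum_mul_left, ENNReal.tsum_mul_right]


def st7base (p : ℝ) (w : (ℤ × ℤ) × (ℤ × ℤ)) : ℝ≥0∞ :=
  st7A (w.1.1 * w.1.2) p * st7A (w.2.1 * w.2.2) p

lemma st7base_sum (p : ℝ) :
    ∑' w : (ℤ×ℤ)×(ℤ×ℤ), st7base p w = (st7Z p * st7Z p) * (st7Z p * st7Z p) := by
  have hsingle : ∑' c : ℤ×ℤ, st7A (c.1*c.2) p = st7Z p * st7Z p := by
    calc ∑' c : ℤ×ℤ, st7A (c.1*c.2) p = ∑' c : ℤ×ℤ, st7A c.1 p * st7A c.2 p :=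
          tsum_congr (fun c => st7A_mul c.1 c.2 p)
      _ = st7Z p * st7Z p := by
            exact st7_tsum_prod_mul (f := fun n : ℤ => st7A n p) (g := fun n : ℤ => st7A n p)
  calc ∑' w : (ℤ×ℤ)×(ℤ×ℤ), st7base p w
      = (∑' c : ℤ×ℤ, st7A (c.1*c.2) p) * (∑' c : ℤ×ℤ, st7A (c.1*c.2) p) := by
        exact st7_tsum_prod_mul (f := fun c : ℤ×ℤ => st7A (c.1*c.2) p)
          (g := fun c : ℤ×ℤ => st7A (c.1*c.2) p)
    _ = (st7Z p * st7Z p) * (st7Z p * st7Z p) := by rw [hsingle]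

def st7π (b₁ b₂ b₃ : ℤ) (v : {v : st7γ // st7P b₁ b₂ b₃ v}) : (ℤ × ℤ) × (ℤ × ℤ) :=
  ((v.1.1.2.1, v.1.2.2.1), (v.1.1.2.2, v.1.2.2.2))

/-- The core estimate: collapsing the first pair. -/
lemma st7_abs_core (b₁ b₂ b₃ : ℤ) (hb₁ : b₁ ≠ 0) (δ p Cd : ℝ) (hδ : 0 < δ)
    (hCd1 : 1 ≤ Cd) (hCd : ∀ K : ℕ, K ≠ 0 → (K.divisors.card : ℝ) ≤ Cd * (K : ℝ) ^ δ) :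
    ∑' v : {v : st7γ // st7P b₁ b₂ b₃ v},
      st7A (v.1.1.1 * v.1.2.1) δ * (st7A (v.1.1.2.1 * v.1.2.2.1) p * st7A (v.1.1.2.2 * v.1.2.2.2) p)
      ≤ ENNReal.ofReal (2*Cd) * ((st7Z p * st7Z p) * (st7Z p * st7Z p)) := by
  classical
  have hinner : ∀ w, (∑' u : {v : {v : st7γ // st7P b₁ b₂ b₃ v} // st7π b₁ b₂ b₃ v = w}, st7A (u.1.1.1.1 * u.1.1.2.1) δ)
      ≤ ENNReal.ofReal (2*Cd) := by
    intro w
    rcases isEmpty_or_nonempty {v : {v : st7γ // st7P b₁ b₂ b₃ v} // st7π b₁ b₂ b₃ v = w} with hE | hNE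
    · rw [tsum_empty]; exact zero_le
    · obtain ⟨u₀⟩ := hNE
      set K : ℤ := u₀.1.1.1.1 * u₀.1.1.2.1 with hKdef
      have hK : K ≠ 0 := mul_ne_zero u₀.1.2.1 u₀.1.2.2.2.2.1
      have hco : ∀ u : {v : {v : st7γ // st7P b₁ b₂ b₃ v} // st7π b₁ b₂ b₃ v = w},
          u.1.1.1.2.1 = u₀.1.1.1.2.1 ∧ u.1.1.2.2.1 = u₀.1.1.2.2.1 ∧
          u.1.1.1.2.2 = u₀.1.1.1.2.2 ∧ u.1.1.2.2.2 = u₀.1.1.2.2.2 := by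
        intro u
        have hw : st7π b₁ b₂ b₃ u.1 = st7π b₁ b₂ b₃ u₀.1 := u.2.trans u₀.2.symm
        simp only [st7π, Prod.mk.injEq] at hw
        exact ⟨hw.1.1, hw.1.2, hw.2.1, hw.2.2⟩
      have hsame : ∀ u : {v : {v : st7γ // st7P b₁ b₂ b₃ v} // st7π b₁ b₂ b₃ v = w}, u.1.1.1.1 * u.1.1.2.1 = K := by
        intro u
        obtain ⟨e2, e4, e3, e5⟩ := hco u
        have h1 := u.1.2.2.2.2.2.2.2
        have h0 := u₀.1.2.2.2.2.2.2.2
        rw [e2, e3, e4, e5] at h1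
        have hb : b₁ * (u.1.1.1.1 * u.1.1.2.1) = b₁ * K := by
          rw [hKdef]; linear_combination h1 - h0
        exact mul_left_cancel₀ hb₁ hb
      have hι : Function.Injective (fun u : {v : {v : st7γ // st7P b₁ b₂ b₃ v} // st7π b₁ b₂ b₃ v = w} => u.1.1.1.1) := by
        intro u u' h
        simp only at h
        have hs : u.1.1.1.1 * u.1.1.2.1 = u'.1.1.1.1 * u'.1.1.2.1 :=
          (hsame u).trans (hsame u').symm
        rw [h] at hs
        have hm : u.1.1.2.1 = u'.1.1.2.1 := mul_left_cancel₀ u'.1.2.1 hs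
        obtain ⟨a2, a4, a3, a5⟩ := hco u
        obtain ⟨b2', b4', b3', b5'⟩ := hco u'
        apply Subtype.ext; apply Subtype.ext
        have h1 : (u.1.1 : st7γ).1 = (u'.1.1 : st7γ).1 := by
          apply Prod.ext h
          apply Prod.ext (a2.trans b2'.symm) (a3.trans b3'.symm)
        have h2 : (u.1.1 : st7γ).2 = (u'.1.1 : st7γ).2 := by
          apply Prod.ext hm
          apply Prod.ext (a4.trans b4'.symm) (a5.trans b5'.symm)
        exact Prod.ext h1 h2
      -- indicator function
      set H : ℤ → ℝ≥0∞ := fun n => if n ∣ K ∧ n ≠ 0 then st7A K δ else 0 with hH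
      have hΦH : ∀ u : {v : {v : st7γ // st7P b₁ b₂ b₃ v} // st7π b₁ b₂ b₃ v = w}, st7A (u.1.1.1.1 * u.1.1.2.1) δ = H (u.1.1.1.1) := by
        intro u
        rw [hsame u, hH]
        simp only
        rw [if_pos ⟨⟨u.1.1.2.1, (hsame u).symm⟩, u.1.2.1⟩]
      set T : Finset ℤ := (Finset.image (fun d : ℕ => (d:ℤ)) K.natAbs.divisors) ∪
          (Finset.image (fun d : ℕ => -(d:ℤ)) K.natAbs.divisors) with hT
      have hHT : ∀ n ∉ T, H n = 0 := by
        intro n hn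
        rw [hH]
        simp only
        rw [if_neg]
        rintro ⟨hdvd, hne⟩
        apply hn
        have hmem : n.natAbs ∈ K.natAbs.divisors :=
          Nat.mem_divisors.mpr ⟨Int.natAbs_dvd_natAbs.mpr hdvd, Int.natAbs_ne_zero.mpr hK⟩
        rw [hT]
        simp only [Finset.mem_union, Finset.mem_image]
        rcases Int.natAbs_eq n with he | he
        · exact Or.inl ⟨n.natAbs, hmem, he.symm⟩
        · exact Or.inr ⟨n.natAbs, hmem, he.symm⟩
      have hcardT : (T.card : ℝ) ≤ 2 * K.natAbs.divisors.card := by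
        have hu := Finset.card_union_le (Finset.image (fun d : ℕ => (d:ℤ)) K.natAbs.divisors)
          (Finset.image (fun d : ℕ => -(d:ℤ)) K.natAbs.divisors)
        have h1 := Finset.card_image_le (s := K.natAbs.divisors) (f := fun d : ℕ => (d:ℤ))
        have h2 := Finset.card_image_le (s := K.natAbs.divisors) (f := fun d : ℕ => -(d:ℤ))
        have hN : T.card ≤ 2 * K.natAbs.divisors.card := by
          rw [hT]; omega
        exact_mod_cast hN
      calc (∑' u : {v : {v : st7γ // st7P b₁ b₂ b₃ v} // st7π b₁ b₂ b₃ v = w}, st7A (u.1.1.1.1 * u.1.1.2.1) δ)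
          = ∑' u : {v : {v : st7γ // st7P b₁ b₂ b₃ v} // st7π b₁ b₂ b₃ v = w}, H (u.1.1.1.1) := tsum_congr hΦH
        _ ≤ ∑' n : ℤ, H n := ENNReal.tsum_comp_le_tsum_of_injective hι H
        _ = ∑ n ∈ T, H n := tsum_eq_sum hHT
        _ ≤ ∑ n ∈ T, st7A K δ := Finset.sum_le_sum (fun n _ => by
            rw [hH]; simp only; split <;> simp)
        _ = T.card • st7A K δ := by rw [Finset.sum_const]
        _ = (T.card : ℝ≥0∞) * st7A K δ := by rw [nsmul_eq_mul]
        _ ≤ ENNReal.ofReal (2 * K.natAbs.divisors.card) * st7A K δ := by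
            apply mul_le_mul_left
            rw [← ENNReal.ofReal_natCast T.card]
            exact ENNReal.ofReal_le_ofReal hcardT
        _ ≤ ENNReal.ofReal (2*Cd) := by
            rw [st7A, ← ENNReal.ofReal_mul (p := 2 * (K.natAbs.divisors.card:ℝ)) (mul_nonneg zero_le_two (Nat.cast_nonneg _))]
            apply ENNReal.ofReal_le_ofReal
            have hKd := hCd K.natAbs (Int.natAbs_ne_zero.mpr hK)
            have habs : |(K:ℝ)| = (K.natAbs : ℝ) := by
              rw [Nat.cast_natAbs]; push_cast; rfl
            have hpos : (0:ℝ) < |(K:ℝ)| ^ δ := by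
              apply Real.rpow_pos_of_pos
              rw [habs]
              exact_mod_cast Nat.pos_of_ne_zero (Int.natAbs_ne_zero.mpr hK)
            rw [habs] at hpos ⊢
            rw [mul_one_div, div_le_iff₀ hpos]
            calc (2 : ℝ) * K.natAbs.divisors.card ≤ 2 * (Cd * (K.natAbs:ℝ) ^ δ) := by linarith
              _ = 2 * Cd * (K.natAbs:ℝ) ^ δ := by ring
      
  -- assemble via fibers
  calc ∑' v : {v : st7γ // st7P b₁ b₂ b₃ v}, st7A (v.1.1.1 * v.1.2.1) δ *
        (st7A (v.1.1.2.1 * v.1.2.2.1) p * st7A (v.1.1.2.2 * v.1.2.2.2) p)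
      = ∑' v : {v : st7γ // st7P b₁ b₂ b₃ v}, st7A (v.1.1.1 * v.1.2.1) δ * st7base p (st7π b₁ b₂ b₃ v) := tsum_congr (fun v => rfl)
    _ = ∑' w, ∑' u : {v : {v : st7γ // st7P b₁ b₂ b₃ v} // st7π b₁ b₂ b₃ v = w}, st7A (u.1.1.1.1 * u.1.1.2.1) δ * st7base p w := by
        rw [← (Equiv.sigmaFiberEquiv (st7π b₁ b₂ b₃)).tsum_eq
          (f := fun v : {v : st7γ // st7P b₁ b₂ b₃ v} => st7A (v.1.1.1 * v.1.2.1) δ * st7base p (st7π b₁ b₂ b₃ v))]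
        rw [ENNReal.tsum_sigma']
        apply tsum_congr; intro w
        apply tsum_congr; intro u
        have hu : st7π b₁ b₂ b₃ u.1 = w := u.2
        simp only [Equiv.sigmaFiberEquiv, Equiv.coe_fn_mk]
        rw [hu]
    _ ≤ ∑' w, ENNReal.ofReal (2*Cd) * st7base p w := by
        apply ENNReal.tsum_le_tsum
        intro w
        rw [ENNReal.tsum_mul_right]
        exact mul_le_mul_left (hinner w) _
    _ = ENNReal.ofReal (2*Cd) * ∑' w, st7base p w := ENNReal.tsum_mul_left
    _ = ENNReal.ofReal (2*Cd) * ((st7Z p * st7Z p) * (st7Z p * st7Z p)) := by rw [st7base_sum p]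

lemma st7_one_le_abs {n : ℤ} (hn : n ≠ 0) : (1:ℝ) ≤ |(n:ℝ)| := by
  rw [← Int.cast_abs]
  exact_mod_cast Int.one_le_abs hn

lemma st7A_two (k l : ℤ) (e : ℝ) :
    ENNReal.ofReal (1/(|(k:ℝ)| * |(l:ℝ)|)^e) = st7A k e * st7A l e := by
  rw [Real.mul_rpow (abs_nonneg _) (abs_nonneg _), ← one_div_mul_one_div,
    ENNReal.ofReal_mul (by positivity)]
  rfl

/-- Key pointwise inequality: collapsing the largest factor. -/
lemma st7_key3aux {s₀ δ x y z : ℝ} (hs₀ : 0 < s₀) (hδ : 0 < δ)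
    (hx : 1 ≤ x) (hy : 1 ≤ y) (hz : 1 ≤ z) (hzx : x ≤ z) (hzy : y ≤ z) :
    1/(x*y*z)^(s₀+δ) ≤ 1/z^δ * (1/(x*y)^(3*s₀/2)) := by
  have hx0 : (0:ℝ) < x := by linarith
  have hy0 : (0:ℝ) < y := by linarith
  have hz0 : (0:ℝ) < z := by linarith
  have h1 : (x*y)^(3*s₀/2) = (x*y)^s₀ * (x*y)^(s₀/2) := by
    rw [← Real.rpow_add (by positivity)]; ring_nf
  have h2 : (x*y)^(s₀/2) ≤ z^s₀ := by
    have hle : x*y ≤ z*z := mul_le_mul hzx hzy (by linarith) (by linarith)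
    calc (x*y)^(s₀/2) ≤ (z*z)^(s₀/2) :=
          Real.rpow_le_rpow (by positivity) hle (by positivity)
      _ = z^(s₀/2) * z^(s₀/2) := Real.mul_rpow (by positivity) (by positivity)
      _ = z^s₀ := by rw [← Real.rpow_add hz0]; ring_nf
  have h3 : (x*y)^s₀ ≤ (x*y)^(s₀+δ) :=
    Real.rpow_le_rpow_of_exponent_le (by nlinarith) (by linarith)
  have hmain : z^δ * (x*y)^(3*s₀/2) ≤ (x*y*z)^(s₀+δ) := by
    have e1 : (x*y*z)^(s₀+δ) = (x*y)^(s₀+δ) * z^(s₀+δ) :=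
      Real.mul_rpow (by positivity) (by positivity)
    have e2 : z^(s₀+δ) = z^s₀ * z^δ := by rw [← Real.rpow_add hz0]
    calc z^δ * (x*y)^(3*s₀/2) = z^δ * ((x*y)^s₀ * (x*y)^(s₀/2)) := by rw [h1]
      _ ≤ z^δ * ((x*y)^(s₀+δ) * z^s₀) := by
          apply mul_le_mul_of_nonneg_left _ (by positivity)
          exact mul_le_mul h3 h2 (by positivity) (by positivity)
      _ = (x*y)^(s₀+δ) * (z^s₀ * z^δ) := by ring
      _ = (x*y*z)^(s₀+δ) := by rw [← e2, ← e1]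
  calc 1/(x*y*z)^(s₀+δ) ≤ 1/(z^δ * (x*y)^(3*s₀/2)) :=
        one_div_le_one_div_of_le (by positivity) hmain
    _ = 1/z^δ * (1/(x*y)^(3*s₀/2)) := by rw [one_div_mul_one_div]

lemma st7_key3 {s₀ δ x y z : ℝ} (hs₀ : 0 < s₀) (hδ : 0 < δ)
    (hx : 1 ≤ x) (hy : 1 ≤ y) (hz : 1 ≤ z) :
    1/(x*y*z)^(s₀+δ) ≤ 1/x^δ * (1/(y*z)^(3*s₀/2)) + 1/y^δ * (1/(x*z)^(3*s₀/2))
      + 1/z^δ * (1/(x*y)^(3*s₀/2)) := by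
  have hx0 : (0:ℝ) < x := by linarith
  have hy0 : (0:ℝ) < y := by linarith
  have hz0 : (0:ℝ) < z := by linarith
  have t1 : (0:ℝ) ≤ 1/x^δ * (1/(y*z)^(3*s₀/2)) := by positivity
  have t2 : (0:ℝ) ≤ 1/y^δ * (1/(x*z)^(3*s₀/2)) := by positivity
  have t3 : (0:ℝ) ≤ 1/z^δ * (1/(x*y)^(3*s₀/2)) := by positivity
  rcases le_total x y with hxy | hxy
  · rcases le_total y z with hyz | hyz
    · -- z is max
      have := st7_key3aux hs₀ hδ hx hy hz (hxy.trans hyz) hyz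
      linarith
    · -- y is max
      have h := st7_key3aux hs₀ hδ hx hz hy hxy hyz
      rw [show x*z*y = x*y*z by ring] at h
      linarith
  · rcases le_total x z with hxz | hxz
    · -- z is max
      have := st7_key3aux hs₀ hδ hx hy hz hxz (hxy.trans hxz)
      linarith
    · -- x is max
      have h := st7_key3aux hs₀ hδ hy hz hx hxy hxz
      rw [show y*z*x = x*y*z by ring] at h
      linarith

def st7Φ (δ p : ℝ) (v : st7γ) : ℝ≥0∞ :=
  st7A (v.1.1 * v.2.1) δ * (st7A (v.1.2.1 * v.2.2.1) p * st7A (v.1.2.2 * v.2.2.2) p)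

def st7e2 : st7γ ≃ st7γ where
  toFun v := ((v.1.2.1, v.1.1, v.1.2.2), (v.2.2.1, v.2.1, v.2.2.2))
  invFun v := ((v.1.2.1, v.1.1, v.1.2.2), (v.2.2.1, v.2.1, v.2.2.2))
  left_inv v := rfl
  right_inv v := rfl

def st7e3 : st7γ ≃ st7γ where
  toFun v := ((v.1.2.2, v.1.2.1, v.1.1), (v.2.2.2, v.2.2.1, v.2.1))
  invFun v := ((v.1.2.2, v.1.2.1, v.1.1), (v.2.2.2, v.2.2.1, v.2.1))
  left_inv v := rfl
  right_inv v := rfl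

lemma st7e2_pred (a₁ a₂ a₃ : ℤ) (v : st7γ) :
    st7P a₁ a₂ a₃ v ↔ st7P a₂ a₁ a₃ (st7e2 v) := by
  simp only [st7e2, Equiv.coe_fn_mk]
  constructor
  · rintro ⟨h1,h2,h3,h4,h5,h6,h7⟩
    exact ⟨h2,h1,h3,h5,h4,h6, by linear_combination h7⟩
  · rintro ⟨h1,h2,h3,h4,h5,h6,h7⟩
    exact ⟨h2,h1,h3,h5,h4,h6, by linear_combination h7⟩

lemma st7e3_pred (a₁ a₂ a₃ : ℤ) (v : st7γ) :
    st7P a₁ a₂ a₃ v ↔ st7P a₃ a₂ a₁ (st7e3 v) := by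
  simp only [st7e3, Equiv.coe_fn_mk]
  constructor
  · rintro ⟨h1,h2,h3,h4,h5,h6,h7⟩
    exact ⟨h3,h2,h1,h6,h5,h4, by linear_combination h7⟩
  · rintro ⟨h1,h2,h3,h4,h5,h6,h7⟩
    exact ⟨h3,h2,h1,h6,h5,h4, by linear_combination h7⟩

lemma st7_abs_core' (b₁ b₂ b₃ : ℤ) (hb₁ : b₁ ≠ 0) (δ p Cd : ℝ) (hδ : 0 < δ)
    (hCd1 : 1 ≤ Cd) (hCd : ∀ K : ℕ, K ≠ 0 → (K.divisors.card : ℝ) ≤ Cd * (K : ℝ) ^ δ) :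
    ∑' v : {v : st7γ // st7P b₁ b₂ b₃ v}, st7Φ δ p v.1
      ≤ ENNReal.ofReal (2*Cd) * ((st7Z p * st7Z p) * (st7Z p * st7Z p)) :=
  st7_abs_core b₁ b₂ b₃ hb₁ δ p Cd hδ hCd1 hCd

lemma st7_sum2 (a₁ a₂ a₃ : ℤ) (δ p : ℝ) :
    ∑' v : {v : st7γ // st7P a₁ a₂ a₃ v}, st7Φ δ p (st7e2 v.1)
      = ∑' u : {v : st7γ // st7P a₂ a₁ a₃ v}, st7Φ δ p u.1 := by
  exact Equiv.tsum_eq (Equiv.subtypeEquiv st7e2 (st7e2_pred a₁ a₂ a₃))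
    (fun u : {v : st7γ // st7P a₂ a₁ a₃ v} => st7Φ δ p u.1)

lemma st7_sum3 (a₁ a₂ a₃ : ℤ) (δ p : ℝ) :
    ∑' v : {v : st7γ // st7P a₁ a₂ a₃ v}, st7Φ δ p (st7e3 v.1)
      = ∑' u : {v : st7γ // st7P a₃ a₂ a₁ v}, st7Φ δ p u.1 := by
  exact Equiv.tsum_eq (Equiv.subtypeEquiv st7e3 (st7e3_pred a₁ a₂ a₃))
    (fun u : {v : st7γ // st7P a₃ a₂ a₁ v} => st7Φ δ p u.1)

lemma st7_pointwise (ε : ℝ) (hε : 0 < ε) (σ₁ σ₂ σ₃ τ₁ τ₂ τ₃ : ℝ)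
    (hσ₁ : 2/3 + ε < σ₁) (hσ₂ : 2/3 + ε < σ₂) (hσ₃ : 2/3 + ε < σ₃)
    (hτ₁ : 2/3 + ε < τ₁) (hτ₂ : 2/3 + ε < τ₂) (hτ₃ : 2/3 + ε < τ₃)
    (n₁ n₂ n₃ m₁ m₂ m₃ : ℤ) (hn₁ : n₁ ≠ 0) (hn₂ : n₂ ≠ 0) (hn₃ : n₃ ≠ 0)
    (hm₁ : m₁ ≠ 0) (hm₂ : m₂ ≠ 0) (hm₃ : m₃ ≠ 0) :
    ENNReal.ofReal (1 / (|(n₁:ℝ)|^σ₁ * |(m₁:ℝ)|^τ₁ * |(n₂:ℝ)|^σ₂ * |(m₂:ℝ)|^τ₂ *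
        |(n₃:ℝ)|^σ₃ * |(m₃:ℝ)|^τ₃))
      ≤ st7A (n₁*m₁) (ε/2) * (st7A (n₂*m₂) (3*(2/3+ε/2)/2) * st7A (n₃*m₃) (3*(2/3+ε/2)/2))
        + st7A (n₂*m₂) (ε/2) * (st7A (n₁*m₁) (3*(2/3+ε/2)/2) * st7A (n₃*m₃) (3*(2/3+ε/2)/2))
        + st7A (n₃*m₃) (ε/2) * (st7A (n₂*m₂) (3*(2/3+ε/2)/2) * st7A (n₁*m₁) (3*(2/3+ε/2)/2)) := by
  set x : ℝ := |((n₁*m₁ : ℤ):ℝ)| with hxd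
  set y : ℝ := |((n₂*m₂ : ℤ):ℝ)| with hyd
  set z : ℝ := |((n₃*m₃ : ℤ):ℝ)| with hzd
  have hx : 1 ≤ x := st7_one_le_abs (mul_ne_zero hn₁ hm₁)
  have hy : 1 ≤ y := st7_one_le_abs (mul_ne_zero hn₂ hm₂)
  have hz : 1 ≤ z := st7_one_le_abs (mul_ne_zero hn₃ hm₃)
  have hx0 : (0:ℝ) < x := lt_of_lt_of_le one_pos hx
  have hy0 : (0:ℝ) < y := lt_of_lt_of_le one_pos hy
  have hz0 : (0:ℝ) < z := lt_of_lt_of_le one_pos hz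
  have an₁ : (1:ℝ) ≤ |(n₁:ℝ)| := st7_one_le_abs hn₁
  have am₁ : (1:ℝ) ≤ |(m₁:ℝ)| := st7_one_le_abs hm₁
  have an₂ : (1:ℝ) ≤ |(n₂:ℝ)| := st7_one_le_abs hn₂
  have am₂ : (1:ℝ) ≤ |(m₂:ℝ)| := st7_one_le_abs hm₂
  have an₃ : (1:ℝ) ≤ |(n₃:ℝ)| := st7_one_le_abs hn₃
  have am₃ : (1:ℝ) ≤ |(m₃:ℝ)| := st7_one_le_abs hm₃
  have hxeq : x = |(n₁:ℝ)| * |(m₁:ℝ)| := by rw [hxd]; push_cast; rw [abs_mul]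
  have hyeq : y = |(n₂:ℝ)| * |(m₂:ℝ)| := by rw [hyd]; push_cast; rw [abs_mul]
  have hzeq : z = |(n₃:ℝ)| * |(m₃:ℝ)| := by rw [hzd]; push_cast; rw [abs_mul]
  set s : ℝ := 2/3+ε/2+ε/2 with hs
  have hsσ₁ : s ≤ σ₁ := by rw [hs]; linarith
  have hsσ₂ : s ≤ σ₂ := by rw [hs]; linarith
  have hsσ₃ : s ≤ σ₃ := by rw [hs]; linarith
  have hsτ₁ : s ≤ τ₁ := by rw [hs]; linarith
  have hsτ₂ : s ≤ τ₂ := by rw [hs]; linarith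
  have hsτ₃ : s ≤ τ₃ := by rw [hs]; linarith
  -- step 1 : compare with uniform exponent s
  have hstep1 : 1 / (|(n₁:ℝ)|^σ₁ * |(m₁:ℝ)|^τ₁ * |(n₂:ℝ)|^σ₂ * |(m₂:ℝ)|^τ₂ *
      |(n₃:ℝ)|^σ₃ * |(m₃:ℝ)|^τ₃) ≤ 1/(x*y*z)^s := by
    have hmono : (x*y*z)^s ≤ |(n₁:ℝ)|^σ₁ * |(m₁:ℝ)|^τ₁ * |(n₂:ℝ)|^σ₂ * |(m₂:ℝ)|^τ₂ *
        |(n₃:ℝ)|^σ₃ * |(m₃:ℝ)|^τ₃ := by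
      have e0 : (x*y*z)^s = x^s * y^s * z^s := by
        rw [Real.mul_rpow (by positivity) (by positivity),
          Real.mul_rpow (by positivity) (by positivity)]
      have e1 : x^s = |(n₁:ℝ)|^s * |(m₁:ℝ)|^s := by
        rw [hxeq, Real.mul_rpow (abs_nonneg _) (abs_nonneg _)]
      have e2 : y^s = |(n₂:ℝ)|^s * |(m₂:ℝ)|^s := by
        rw [hyeq, Real.mul_rpow (abs_nonneg _) (abs_nonneg _)]
      have e3 : z^s = |(n₃:ℝ)|^s * |(m₃:ℝ)|^s := by
        rw [hzeq, Real.mul_rpow (abs_nonneg _) (abs_nonneg _)]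
      have hp1 : |(n₁:ℝ)|^s * |(m₁:ℝ)|^s ≤ |(n₁:ℝ)|^σ₁ * |(m₁:ℝ)|^τ₁ :=
        mul_le_mul (Real.rpow_le_rpow_of_exponent_le an₁ hsσ₁)
          (Real.rpow_le_rpow_of_exponent_le am₁ hsτ₁) (by positivity) (by positivity)
      have hp2 : |(n₂:ℝ)|^s * |(m₂:ℝ)|^s ≤ |(n₂:ℝ)|^σ₂ * |(m₂:ℝ)|^τ₂ :=
        mul_le_mul (Real.rpow_le_rpow_of_exponent_le an₂ hsσ₂)
          (Real.rpow_le_rpow_of_exponent_le am₂ hsτ₂) (by positivity) (by positivity)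
      have hp3 : |(n₃:ℝ)|^s * |(m₃:ℝ)|^s ≤ |(n₃:ℝ)|^σ₃ * |(m₃:ℝ)|^τ₃ :=
        mul_le_mul (Real.rpow_le_rpow_of_exponent_le an₃ hsσ₃)
          (Real.rpow_le_rpow_of_exponent_le am₃ hsτ₃) (by positivity) (by positivity)
      calc (x*y*z)^s = (|(n₁:ℝ)|^s * |(m₁:ℝ)|^s) * (|(n₂:ℝ)|^s * |(m₂:ℝ)|^s) *
            (|(n₃:ℝ)|^s * |(m₃:ℝ)|^s) := by rw [e0, e1, e2, e3]
        _ ≤ (|(n₁:ℝ)|^σ₁ * |(m₁:ℝ)|^τ₁) * (|(n₂:ℝ)|^σ₂ * |(m₂:ℝ)|^τ₂) *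
            (|(n₃:ℝ)|^σ₃ * |(m₃:ℝ)|^τ₃) := by
            apply mul_le_mul (mul_le_mul hp1 hp2 (by positivity) (by positivity)) hp3
              (by positivity) (by positivity)
        _ = |(n₁:ℝ)|^σ₁ * |(m₁:ℝ)|^τ₁ * |(n₂:ℝ)|^σ₂ * |(m₂:ℝ)|^τ₂ *
            |(n₃:ℝ)|^σ₃ * |(m₃:ℝ)|^τ₃ := by ring
    exact one_div_le_one_div_of_le (Real.rpow_pos_of_pos (by positivity) _) hmono
  -- step 2 : key inequality
  have hkey := st7_key3 (s₀ := 2/3+ε/2) (δ := ε/2) (by linarith) (by linarith) hx hy hz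
  have hreal : 1 / (|(n₁:ℝ)|^σ₁ * |(m₁:ℝ)|^τ₁ * |(n₂:ℝ)|^σ₂ * |(m₂:ℝ)|^τ₂ *
      |(n₃:ℝ)|^σ₃ * |(m₃:ℝ)|^τ₃) ≤
      1/x^(ε/2) * (1/(y*z)^(3*(2/3+ε/2)/2)) + 1/y^(ε/2) * (1/(x*z)^(3*(2/3+ε/2)/2))
        + 1/z^(ε/2) * (1/(x*y)^(3*(2/3+ε/2)/2)) := le_trans hstep1 hkey
  -- step 3 : convert to ENNReal
  have hT1 : (0:ℝ) ≤ 1/x^(ε/2) * (1/(y*z)^(3*(2/3+ε/2)/2)) := by positivity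
  have hT2 : (0:ℝ) ≤ 1/y^(ε/2) * (1/(x*z)^(3*(2/3+ε/2)/2)) := by positivity
  have hT3 : (0:ℝ) ≤ 1/z^(ε/2) * (1/(x*y)^(3*(2/3+ε/2)/2)) := by positivity
  calc ENNReal.ofReal (1 / (|(n₁:ℝ)|^σ₁ * |(m₁:ℝ)|^τ₁ * |(n₂:ℝ)|^σ₂ * |(m₂:ℝ)|^τ₂ *
        |(n₃:ℝ)|^σ₃ * |(m₃:ℝ)|^τ₃))
      ≤ ENNReal.ofReal (1/x^(ε/2) * (1/(y*z)^(3*(2/3+ε/2)/2))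
          + 1/y^(ε/2) * (1/(x*z)^(3*(2/3+ε/2)/2))
          + 1/z^(ε/2) * (1/(x*y)^(3*(2/3+ε/2)/2))) := ENNReal.ofReal_le_ofReal hreal
    _ = ENNReal.ofReal (1/x^(ε/2) * (1/(y*z)^(3*(2/3+ε/2)/2)))
          + ENNReal.ofReal (1/y^(ε/2) * (1/(x*z)^(3*(2/3+ε/2)/2)))
          + ENNReal.ofReal (1/z^(ε/2) * (1/(x*y)^(3*(2/3+ε/2)/2))) := by
        rw [ENNReal.ofReal_add (by positivity) hT3, ENNReal.ofReal_add hT1 hT2]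
    _ = st7A (n₁*m₁) (ε/2) * (st7A (n₂*m₂) (3*(2/3+ε/2)/2) * st7A (n₃*m₃) (3*(2/3+ε/2)/2))
        + st7A (n₂*m₂) (ε/2) * (st7A (n₁*m₁) (3*(2/3+ε/2)/2) * st7A (n₃*m₃) (3*(2/3+ε/2)/2))
        + st7A (n₃*m₃) (ε/2) * (st7A (n₂*m₂) (3*(2/3+ε/2)/2) * st7A (n₁*m₁) (3*(2/3+ε/2)/2)) := by
        rw [ENNReal.ofReal_mul (by positivity), ENNReal.ofReal_mul (by positivity),
          ENNReal.ofReal_mul (by positivity)]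
        rw [st7A_two (n₂*m₂) (n₃*m₃), st7A_two (n₁*m₁) (n₃*m₃), st7A_two (n₁*m₁) (n₂*m₂)]
        have c1 : ENNReal.ofReal (1/x^(ε/2)) = st7A (n₁*m₁) (ε/2) := by rw [hxd]; rfl
        have c2 : ENNReal.ofReal (1/y^(ε/2)) = st7A (n₂*m₂) (ε/2) := by rw [hyd]; rfl
        have c3 : ENNReal.ofReal (1/z^(ε/2)) = st7A (n₃*m₃) (ε/2) := by rw [hzd]; rfl
        rw [c1, c2, c3]
        ring

lemma st7_final {ι : Type*} (f : ι → ℝ) (hnn : ∀ v, 0 ≤ f v) (E : ℝ≥0∞) (hE : E ≠ ⊤)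
    (h : ∑' v, ENNReal.ofReal (f v) ≤ E) : ∑' v, f v ≤ E.toReal := by
  by_cases hs : Summable f
  · have h1 : ENNReal.ofReal (∑' v, f v) = ∑' v, ENNReal.ofReal (f v) :=
      ENNReal.ofReal_tsum_of_nonneg hnn hs
    exact (ENNReal.ofReal_le_iff_le_toReal hE).mp (h1 ▸ h)
  · rw [tsum_eq_zero_of_not_summable hs]
    exact ENNReal.toReal_nonneg

/-- Uniform bound for the parabolic Eisenstein series on the real axis:
for `2/3 + ε < σᵢ, τᵢ ≤ 11/12` the sum over nonzero sextuples with
`a₁n₁m₁ + a₂n₂m₂ + a₃n₃m₃ = 0` of `1/(|n₁|^σ₁|m₁|^τ₁⋯)` is bounded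
uniformly in `a`.  Here `v.1 = (n₁, n₂, n₃)` and `v.2 = (m₁, m₂, m₃)`. -/
theorem statement7 (ε : ℝ) (hε : 0 < ε) :
    ∃ C : ℝ, 0 < C ∧ ∀ a₁ a₂ a₃ : ℤ, a₁ ≠ 0 → a₂ ≠ 0 → a₃ ≠ 0 →
      ∀ σ₁ σ₂ σ₃ τ₁ τ₂ τ₃ : ℝ,
        2 / 3 + ε < σ₁ → σ₁ ≤ 11 / 12 → 2 / 3 + ε < σ₂ → σ₂ ≤ 11 / 12 →
        2 / 3 + ε < σ₃ → σ₃ ≤ 11 / 12 → 2 / 3 + ε < τ₁ → τ₁ ≤ 11 / 12 →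
        2 / 3 + ε < τ₂ → τ₂ ≤ 11 / 12 → 2 / 3 + ε < τ₃ → τ₃ ≤ 11 / 12 →
        (∑' v : {v : (ℤ × ℤ × ℤ) × (ℤ × ℤ × ℤ) //
            v.1.1 ≠ 0 ∧ v.1.2.1 ≠ 0 ∧ v.1.2.2 ≠ 0 ∧
            v.2.1 ≠ 0 ∧ v.2.2.1 ≠ 0 ∧ v.2.2.2 ≠ 0 ∧
            a₁ * v.1.1 * v.2.1 + a₂ * v.1.2.1 * v.2.2.1 + a₃ * v.1.2.2 * v.2.2.2 = 0},
          1 / (|(v.val.1.1 : ℝ)| ^ σ₁ * |(v.val.2.1 : ℝ)| ^ τ₁ *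
            |(v.val.1.2.1 : ℝ)| ^ σ₂ * |(v.val.2.2.1 : ℝ)| ^ τ₂ *
            |(v.val.1.2.2 : ℝ)| ^ σ₃ * |(v.val.2.2.2 : ℝ)| ^ τ₃)) ≤ C := by
  classical
  obtain ⟨Cd, hCd1, hCd⟩ := divisor_bound (δ := ε/2) (by positivity)
  have hp1 : (1:ℝ) < 3*(2/3+ε/2)/2 := by linarith
  set p : ℝ := 3*(2/3+ε/2)/2 with hp
  set E₀ : ℝ≥0∞ := ENNReal.ofReal (2*Cd) * ((st7Z p * st7Z p) * (st7Z p * st7Z p)) with hE₀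
  have hztop : st7Z p ≠ ⊤ := st7Z_ne_top hp1
  have hE₀top : E₀ ≠ ⊤ := by
    rw [hE₀]
    exact ENNReal.mul_ne_top ENNReal.ofReal_ne_top
      (ENNReal.mul_ne_top (ENNReal.mul_ne_top hztop hztop) (ENNReal.mul_ne_top hztop hztop))
  have hEtop : E₀ + E₀ + E₀ ≠ ⊤ := by
    simp [ENNReal.add_ne_top, hE₀top]
  refine ⟨(E₀+E₀+E₀).toReal + 1, by positivity, ?_⟩
  intro a₁ a₂ a₃ ha₁ ha₂ ha₃ σ₁ σ₂ σ₃ τ₁ τ₂ τ₃ hσ₁ hσ₁' hσ₂ hσ₂' hσ₃ hσ₃' hτ₁ hτ₁' hτ₂ hτ₂' hτ₃ hτ₃'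
  have hens : ∑' v : {v : st7γ // st7P a₁ a₂ a₃ v},
      ENNReal.ofReal (1 / (|(v.val.1.1 : ℝ)| ^ σ₁ * |(v.val.2.1 : ℝ)| ^ τ₁ *
        |(v.val.1.2.1 : ℝ)| ^ σ₂ * |(v.val.2.2.1 : ℝ)| ^ τ₂ *
        |(v.val.1.2.2 : ℝ)| ^ σ₃ * |(v.val.2.2.2 : ℝ)| ^ τ₃)) ≤ E₀ + E₀ + E₀ := by
    calc ∑' v : {v : st7γ // st7P a₁ a₂ a₃ v},
        ENNReal.ofReal (1 / (|(v.val.1.1 : ℝ)| ^ σ₁ * |(v.val.2.1 : ℝ)| ^ τ₁ *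
          |(v.val.1.2.1 : ℝ)| ^ σ₂ * |(v.val.2.2.1 : ℝ)| ^ τ₂ *
          |(v.val.1.2.2 : ℝ)| ^ σ₃ * |(v.val.2.2.2 : ℝ)| ^ τ₃))
        ≤ ∑' v : {v : st7γ // st7P a₁ a₂ a₃ v},
            (st7Φ (ε/2) p v.1 + st7Φ (ε/2) p (st7e2 v.1) + st7Φ (ε/2) p (st7e3 v.1)) := by
          apply ENNReal.tsum_le_tsum
          intro v
          obtain ⟨h1, h2, h3, h4, h5, h6, h7⟩ := v.2
          exact st7_pointwise ε hε σ₁ σ₂ σ₃ τ₁ τ₂ τ₃ hσ₁ hσ₂ hσ₃ hτ₁ hτ₂ hτ₃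
            v.1.1.1 v.1.1.2.1 v.1.1.2.2 v.1.2.1 v.1.2.2.1 v.1.2.2.2 h1 h2 h3 h4 h5 h6
      _ = (∑' v : {v : st7γ // st7P a₁ a₂ a₃ v}, st7Φ (ε/2) p v.1)
          + (∑' v : {v : st7γ // st7P a₁ a₂ a₃ v}, st7Φ (ε/2) p (st7e2 v.1))
          + (∑' v : {v : st7γ // st7P a₁ a₂ a₃ v}, st7Φ (ε/2) p (st7e3 v.1)) := by
          rw [ENNReal.tsum_add, ENNReal.tsum_add]
      _ ≤ E₀ + E₀ + E₀ := by
          refine add_le_add (add_le_add ?_ ?_) ?_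
          · exact st7_abs_core' a₁ a₂ a₃ ha₁ (ε/2) p Cd (by positivity) hCd1 hCd
          · rw [st7_sum2]
            exact st7_abs_core' a₂ a₁ a₃ ha₂ (ε/2) p Cd (by positivity) hCd1 hCd
          · rw [st7_sum3]
            exact st7_abs_core' a₃ a₂ a₁ ha₃ (ε/2) p Cd (by positivity) hCd1 hCd
  have hfin := st7_final (fun v : {v : st7γ // st7P a₁ a₂ a₃ v} =>
      1 / (|(v.val.1.1 : ℝ)| ^ σ₁ * |(v.val.2.1 : ℝ)| ^ τ₁ *
        |(v.val.1.2.1 : ℝ)| ^ σ₂ * |(v.val.2.2.1 : ℝ)| ^ τ₂ *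
        |(v.val.1.2.2 : ℝ)| ^ σ₃ * |(v.val.2.2.2 : ℝ)| ^ τ₃))
    (fun v => by positivity) (E₀+E₀+E₀) hEtop hens
  exact hfin.trans (by linarith)
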